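/- For every finite connected loopless multigraph G, the scramble number of G is at most the screewidth of G: sn(G) ≤ scw(G). -/

import Mathlib

open Finset

/-- A finite loopless multigraph on a vertex type `V`, given by a symmetric
edge-multiplicity function with zero diagonal. -/
structure Multigraph (V : Type) [Fintype V] [DecidableEq V] where
  m : V → V → ℕ
  symm : ∀ u v, m u v = m v u
  loopless : ∀ v, m v v = 0

namespace Multigraph

variable {V : Type} [Fintype V] [DecidableEq V] (G : Multigraph V)

/-- The underlying simple graph: adjacent iff joined by at least one edge. -/
def toSimpleGraph : SimpleGraph V where
  Adj u v := 0 < G.m u v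
  symm := by
    constructor
    intro u v h
    rw [G.symm v u]
    exact h
  loopless := by
    constructor
    intro v h
    rw [G.loopless v] at h
    exact lt_irrefl 0 h

/-- A multigraph is connected if its underlying simple graph is. -/
def Connected : Prop := G.toSimpleGraph.Connected

/-- The valence of a vertex: the number of edges incident to it. -/
def val (v : V) : ℕ := ∑ w, G.m v w

end Multigraph

/-- The degree of a divisor: the sum of its values. -/
def Divisor.deg {V : Type} [Fintype V] (D : V → ℤ) : ℤ := ∑ v, D v

/-- A divisor is effective if all its values are nonnegative. -/
def Divisor.Effective {V : Type} (D : V → ℤ) : Prop := ∀ v, 0 ≤ D v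

namespace Multigraph

variable {V : Type} [Fintype V] [DecidableEq V] (G : Multigraph V)

/-- The result of firing the vertex `v`: `v` loses its valence many chips, and
every other vertex `w` gains `m v w` chips. -/
def fire (v : V) (D : V → ℤ) : V → ℤ :=
  fun w => D w + (G.m v w : ℤ) - if w = v then (G.val v : ℤ) else 0

/-- Two divisors are equivalent if one is obtained from the other by a finite
sequence of firing moves. -/
def Equivalent (D D' : V → ℤ) : Prop :=
  Relation.ReflTransGen (fun A B => ∃ v, B = G.fire v A) D D'

/-- A divisor `D` wins the Gonality Game if for every vertex `q`, the divisor
`D - 1_q` is equivalent to an effective divisor. -/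
def Winning (D : V → ℤ) : Prop :=
  ∀ q : V, ∃ D' : V → ℤ,
    G.Equivalent (fun w => D w - if w = q then 1 else 0) D' ∧ Divisor.Effective D'

/-- The gonality of `G`: the minimum degree of an effective divisor that wins
the Gonality Game. -/
noncomputable def gonality : ℕ :=
  sInf {n : ℕ | ∃ D : V → ℤ, Divisor.Effective D ∧ G.Winning D ∧ Divisor.deg D = (n : ℤ)}

end Multigraph

/-- The multigraph associated to a simple graph: one edge for each adjacency. -/
def Multigraph.ofSimpleGraph {V : Type} [Fintype V] [DecidableEq V]
    (G : SimpleGraph V) [DecidableRel G.Adj] : Multigraph V where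
  m u v := if G.Adj u v then 1 else 0
  symm := by
    intro u v
    by_cases h : G.Adj u v
    · simp [h, h.symm]
    · have h' : ¬ G.Adj v u := fun hvu => h hvu.symm
      simp [h, h']
  loopless := by intro v; simp

/-- A hitting set for a collection of vertex sets: a set of vertices meeting
every member of the collection. -/
def IsHittingSet {V : Type} [DecidableEq V] (B : Finset (Finset V)) (W : Finset V) : Prop :=
  ∀ A ∈ B, (A ∩ W).Nonempty

/-- The minimum size of a hitting set for a collection of vertex sets. -/
noncomputable def hittingNumber {V : Type} [DecidableEq V] (B : Finset (Finset V)) : ℕ :=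
  sInf {k : ℕ | ∃ W : Finset V, IsHittingSet B W ∧ W.card = k}

namespace Multigraph

variable {V : Type} [Fintype V] [DecidableEq V] (G : Multigraph V)

/-- A set of vertices induces a connected subgraph. -/
def ConnectedSet (A : Finset V) : Prop :=
  (G.toSimpleGraph.induce (A : Set V)).Connected

/-- Two vertex sets touch: they share a vertex, or an edge of `G` joins them. -/
def Touches (A B : Finset V) : Prop :=
  (A ∩ B).Nonempty ∨ ∃ a ∈ A, ∃ b ∈ B, 0 < G.m a b

/-- A bramble: a collection of vertex sets, each inducing a connected subgraph,
any two of which touch. -/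
def IsBramble (B : Finset (Finset V)) : Prop :=
  (∀ A ∈ B, G.ConnectedSet A) ∧ ∀ A ∈ B, ∀ A' ∈ B, G.Touches A A'

/-- The treewidth of `G`: the maximum order (minimum size of a hitting set) of
a bramble on `G`, minus one. -/
noncomputable def treewidth : ℕ :=
  sSup {k : ℕ | ∃ B : Finset (Finset V), G.IsBramble B ∧ hittingNumber B = k} - 1

end Multigraph

namespace Multigraph

variable {V : Type} [Fintype V] [DecidableEq V] (G : Multigraph V)

/-- A scramble: a collection of vertex sets (eggs), each inducing a connected
subgraph. -/
def IsScramble (S : Finset (Finset V)) : Prop :=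
  ∀ A ∈ S, G.ConnectedSet A

/-- The number of edges of `G` with exactly one endpoint in `A`. -/
def cutSize (A : Finset V) : ℕ := ∑ u ∈ A, ∑ v ∈ Aᶜ, G.m u v

/-- The egg-cut number of a scramble: the minimum number of edges of `G` whose
removal separates `G` into two parts, each containing all vertices of some egg
(`⊤` if no such cut exists).  Such cuts are exactly the sets of edges joining
some `A` containing an egg to its complement, also containing an egg. -/
noncomputable def eggCutNumber (S : Finset (Finset V)) : ℕ∞ :=
  sInf {k : ℕ∞ | ∃ A : Finset V, (∃ e ∈ S, e ⊆ A) ∧ (∃ e ∈ S, e ⊆ Aᶜ) ∧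
    (G.cutSize A : ℕ∞) = k}

/-- The order of a scramble: the minimum of its hitting number and its egg-cut
number. -/
noncomputable def scrambleOrder (S : Finset (Finset V)) : ℕ∞ :=
  min (hittingNumber S : ℕ∞) (G.eggCutNumber S)

/-- The scramble number of `G`: the maximum order of a scramble on `G`. -/
noncomputable def scrambleNumber : ℕ∞ :=
  sSup {k : ℕ∞ | ∃ S : Finset (Finset V), G.IsScramble S ∧ G.scrambleOrder S = k}

end Multigraph

namespace Multigraph

variable {V : Type} [Fintype V] [DecidableEq V] (G : Multigraph V)

open scoped Classical in
/-- Given a tree-cut decomposition `(T, b)` of `G`, the number of edges of `G`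
routed through the link `{x, y}` of `T`: an edge `uv` of `G` is routed through
the link iff `b u` and `b v` are separated by deleting that link from `T`.
Each edge of `G` is counted once (the double sum counts ordered pairs). -/
noncomputable def linkCount {N : Type} (T : SimpleGraph N) (b : V → N) (x y : N) : ℕ :=
  (∑ u : V, ∑ v : V,
    if ¬ (T.deleteEdges {s(x, y)}).Reachable (b u) (b v) then G.m u v else 0) / 2

open scoped Classical in
/-- Given a tree-cut decomposition `(T, b)` of `G`, the number of vertices of
`G` assigned to the node `n`, plus the number of edges of `G` routed through
`n` with neither endpoint assigned to `n` (an edge `uv` is routed through `n`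
iff `n` lies on the path in `T` from `b u` to `b v`). -/
noncomputable def nodeCount {N : Type} (T : SimpleGraph N) (b : V → N) (n : N) : ℕ :=
  (Finset.univ.filter fun v => b v = n).card +
  (∑ u : V, ∑ v : V,
    if b u ≠ n ∧ b v ≠ n ∧ ∃ p : T.Walk (b u) (b v), p.IsPath ∧ n ∈ p.support
    then G.m u v else 0) / 2

/-- The width of a tree-cut decomposition: the maximum over all links of the
number of edges routed through the link, and over all nodes of the number of
vertices assigned to the node plus the number of edges tunneling through it. -/
noncomputable def decompositionWidth {N : Type} (T : SimpleGraph N) (b : V → N) : ℕ :=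
  sSup ({k : ℕ | ∃ x y, T.Adj x y ∧ G.linkCount T b x y = k} ∪
        {k : ℕ | ∃ n, G.nodeCount T b n = k})

/-- The screewidth of `G`: the minimum width of a tree-cut decomposition of
`G`, i.e. of a (finite) tree `T` with the vertices of `G` assigned to its
nodes. -/
noncomputable def screewidth : ℕ :=
  sInf {k : ℕ | ∃ (r : ℕ) (T : SimpleGraph (Fin r)) (b : V → Fin r),
    T.IsTree ∧ G.decompositionWidth T b = k}

end Multigraph

section Aux

open SimpleGraph Finset

open scoped Classical

variable {V : Type} [Fintype V] [DecidableEq V]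

/-- Sink lemma: in a finite tree whose every edge admits at least one
"direction", some node has all incident edges directed toward it. -/
lemma tree_sink_exists {N : Type} [Fintype N] [Nonempty N]
    (T : SimpleGraph N) (hT : T.IsTree)
    (R : N → N → Prop) (hR : ∀ x y, T.Adj x y → R x y ∨ R y x) :
    ∃ n, ∀ y, T.Adj n y → R y n := by
  by_contra hcon
  push_neg at hcon
  choose f hadj hnR using hcon
  have hmem : ∀ n ∈ (Finset.univ : Finset N), s(n, f n) ∈ T.edgeFinset := fun n _ => by
    rw [SimpleGraph.mem_edgeFinset, SimpleGraph.mem_edgeSet]; exact hadj n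
  have hinj : Set.InjOn (fun n => s(n, f n)) (Finset.univ : Finset N) := by
    intro a _ c _ h
    simp only [Sym2.eq_iff] at h
    rcases h with ⟨h1, _⟩ | ⟨h1, h2⟩
    · exact h1
    · exfalso
      have hac : T.Adj a c := h2 ▸ hadj a
      rcases hR a c hac with h | h
      · exact hnR c (h1 ▸ h)
      · exact hnR a (h2 ▸ h)
  have hcard := Finset.card_le_card_of_injOn (fun n => s(n, f n)) hmem hinj
  have htree := hT.card_edgeFinset
  simp only [Finset.card_univ] at hcard
  omega

/-- The set of vertices of `G` whose image lies on the `x`-side of the link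
`{x, y}` of `T`. -/
noncomputable def side {N : Type} [Fintype N] (T : SimpleGraph N) (b : V → N)
    (x y : N) : Finset V :=
  Finset.univ.filter (fun v => (T.deleteEdges {s(x, y)}).Reachable (b v) x)

lemma mem_side_iff {N : Type} [Fintype N] {T : SimpleGraph N} {b : V → N}
    {x y : N} {v : V} :
    v ∈ side T b x y ↔ (T.deleteEdges {s(x, y)}).Reachable (b v) x := by
  simp [side]

lemma deleteEdges_swap {N : Type} (T : SimpleGraph N) (x y : N) :
    T.deleteEdges {s(x, y)} = T.deleteEdges {s(y, x)} := by
  rw [Sym2.eq_swap]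

/-- After deleting one edge from a connected graph, every vertex can still
reach one of the two endpoints of that edge. -/
lemma reach_side {N : Type} {T : SimpleGraph N} (hT : T.Connected) (x y n : N) :
    (T.deleteEdges {s(x, y)}).Reachable n x ∨ (T.deleteEdges {s(x, y)}).Reachable n y := by
  have key : ∀ {a c : N} (_ : T.Walk a c),
      (T.deleteEdges {s(x, y)}).Reachable a c ∨
      (T.deleteEdges {s(x, y)}).Reachable a x ∨ (T.deleteEdges {s(x, y)}).Reachable a y := by
    intro a c p
    induction p with
    | nil => exact Or.inl (Reachable.refl _)
    | @cons a d c h q ih =>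
      by_cases he : s(a, d) = s(x, y)
      · rw [Sym2.eq_iff] at he
        rcases he with ⟨rfl, rfl⟩ | ⟨rfl, rfl⟩
        · exact Or.inr (Or.inl (Reachable.refl _))
        · exact Or.inr (Or.inr (Reachable.refl _))
      · have hadj : (T.deleteEdges {s(x, y)}).Adj a d := by
          rw [SimpleGraph.deleteEdges_adj]
          exact ⟨h, by simpa using he⟩
        rcases ih with h' | h' | h'
        · exact Or.inl (hadj.reachable.trans h')
        · exact Or.inr (Or.inl (hadj.reachable.trans h'))
        · exact Or.inr (Or.inr (hadj.reachable.trans h'))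
  obtain ⟨p⟩ := hT.preconnected n x
  rcases key p with h | h | h
  · exact Or.inl h
  · exact Or.inl h
  · exact Or.inr h

lemma not_reach_of_adj {N : Type} {T : SimpleGraph N} (hT : T.IsTree) {x y : N}
    (h : T.Adj x y) : ¬ (T.deleteEdges {s(x, y)}).Reachable x y := by
  have hb : T.IsBridge s(x, y) :=
    SimpleGraph.isAcyclic_iff_forall_edge_isBridge.mp hT.IsAcyclic
      (by rwa [SimpleGraph.mem_edgeSet])
  rw [SimpleGraph.isBridge_iff] at hb
  exact hb

lemma side_compl {N : Type} [Fintype N] {T : SimpleGraph N} (b : V → N)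
    (hT : T.IsTree) {x y : N} (h : T.Adj x y) :
    side T b y x = (side T b x y)ᶜ := by
  ext v
  rw [Finset.mem_compl, mem_side_iff, mem_side_iff]
  constructor
  · intro h1 h2
    have h1' : (T.deleteEdges {s(x, y)}).Reachable (b v) y := by
      rw [deleteEdges_swap]; exact h1
    exact not_reach_of_adj hT h (h2.symm.trans h1')
  · intro h2
    rcases reach_side hT.isConnected x y (b v) with h1 | h1
    · exact absurd h1 h2
    · rw [deleteEdges_swap T y x]; exact h1

lemma ite_congr' {α : Sort*} {c d : Prop} {i1 : Decidable c} {i2 : Decidable d} {x y : α}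
    (h : c ↔ d) : @ite _ c i1 x y = @ite _ d i2 x y := by
  cases propext h
  congr

lemma linkCount_eq_cutSize (G : Multigraph V) {N : Type} [Fintype N]
    (T : SimpleGraph N) (b : V → N) (hT : T.IsTree) {x y : N} (hxy : T.Adj x y) :
    G.linkCount T b x y = G.cutSize (side T b x y) := by
  set A := side T b x y with hA
  have hnxy := not_reach_of_adj hT hxy
  have hiff : ∀ u v : V, (¬ (T.deleteEdges {s(x, y)}).Reachable (b u) (b v)) ↔
      ((u ∈ A ∧ v ∈ Aᶜ) ∨ (u ∈ Aᶜ ∧ v ∈ A)) := by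
    intro u v
    have hu := reach_side hT.isConnected x y (b u)
    have hv := reach_side hT.isConnected x y (b v)
    have hmemu : u ∈ A ↔ (T.deleteEdges {s(x, y)}).Reachable (b u) x := mem_side_iff
    have hmemv : v ∈ A ↔ (T.deleteEdges {s(x, y)}).Reachable (b v) x := mem_side_iff
    rw [Finset.mem_compl, Finset.mem_compl]
    constructor
    · intro hnr
      rcases hu with h1 | h1 <;> rcases hv with h2 | h2
      · exact absurd (h1.trans h2.symm) hnr
      · refine Or.inl ⟨hmemu.2 h1, fun hc => ?_⟩
        exact hnxy ((h1.symm.trans (hmemu.1 (hmemu.2 h1))).symm.trans ((hmemv.1 hc).symm.trans h2))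
      · refine Or.inr ⟨fun hc => ?_, hmemv.2 h2⟩
        exact hnxy (((hmemu.1 hc).symm.trans h1))
      · exact absurd (h1.trans h2.symm) hnr
    · rintro (⟨h1, h2⟩ | ⟨h1, h2⟩) hr
      · have hvy : (T.deleteEdges {s(x, y)}).Reachable (b v) y := by
          rcases hv with h' | h'
          · exact absurd (hmemv.2 h') h2
          · exact h'
        exact hnxy ((hmemu.1 h1).symm.trans (hr.trans hvy))
      · have huy : (T.deleteEdges {s(x, y)}).Reachable (b u) y := by
          rcases hu with h' | h'
          · exact absurd (hmemu.2 h') h1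
          · exact h'
        exact hnxy ((hmemv.1 h2).symm.trans (hr.symm.trans huy))
  have hstep : ∀ u v : V,
      (if ¬ (T.deleteEdges {s(x, y)}).Reachable (b u) (b v) then G.m u v else 0) =
      (if u ∈ A ∧ v ∈ Aᶜ then G.m u v else 0) + (if u ∈ Aᶜ ∧ v ∈ A then G.m u v else 0) := by
    intro u v
    by_cases h1 : u ∈ A <;> by_cases h2 : v ∈ A <;>
      simp [hiff u v, h1, h2]
  have hpair : ∀ (B C : Finset V),
      (∑ u : V, ∑ v : V, if u ∈ B ∧ v ∈ C then G.m u v else 0) =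
      ∑ u ∈ B, ∑ v ∈ C, G.m u v := by
    intro B C
    have h1 : ∀ u : V, (∑ v : V, if u ∈ B ∧ v ∈ C then G.m u v else 0)
        = if u ∈ B then ∑ v ∈ C, G.m u v else 0 := by
      intro u
      by_cases hu : u ∈ B
      · rw [if_pos hu]
        rw [show (∑ v : V, if u ∈ B ∧ v ∈ C then G.m u v else 0)
            = ∑ v : V, if v ∈ C then G.m u v else 0 from
          Finset.sum_congr rfl fun v _ => by
            by_cases hv : v ∈ C
            · rw [if_pos ⟨hu, hv⟩, if_pos hv]
            · rw [if_neg (fun hc => hv hc.2), if_neg hv]]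
        rw [Finset.sum_ite_mem, Finset.univ_inter]
      · rw [if_neg hu]
        refine Finset.sum_eq_zero fun v _ => if_neg (fun hc => hu hc.1)
    rw [Finset.sum_congr rfl fun u _ => h1 u]
    have : ∀ u : V, (if u ∈ B then ∑ v ∈ C, G.m u v else 0) =
        (if u ∈ B then (fun w => ∑ v ∈ C, G.m w v) u else 0) := fun u => rfl
    rw [Finset.sum_congr rfl fun u _ => this u, Finset.sum_ite_mem, Finset.univ_inter]
  have hsum : (∑ u : V, ∑ v : V,
      if ¬ (T.deleteEdges {s(x, y)}).Reachable (b u) (b v) then G.m u v else 0) =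
      2 * G.cutSize A := by
    calc (∑ u : V, ∑ v : V,
        if ¬ (T.deleteEdges {s(x, y)}).Reachable (b u) (b v) then G.m u v else 0)
        = (∑ u : V, ∑ v : V, ((if u ∈ A ∧ v ∈ Aᶜ then G.m u v else 0) +
            (if u ∈ Aᶜ ∧ v ∈ A then G.m u v else 0))) :=
          Finset.sum_congr rfl fun u _ => Finset.sum_congr rfl fun v _ => hstep u v
      _ = (∑ u : V, ∑ v : V, if u ∈ A ∧ v ∈ Aᶜ then G.m u v else 0) +
          (∑ u : V, ∑ v : V, if u ∈ Aᶜ ∧ v ∈ A then G.m u v else 0) := by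
          simp only [Finset.sum_add_distrib]
      _ = (∑ u ∈ A, ∑ v ∈ Aᶜ, G.m u v) + (∑ u ∈ Aᶜ, ∑ v ∈ A, G.m u v) := by
          rw [hpair A Aᶜ, hpair Aᶜ A]
      _ = G.cutSize A + G.cutSize A := by
          rw [Multigraph.cutSize]
          congr 1
          rw [Finset.sum_comm]
          exact Finset.sum_congr rfl fun i _ => Finset.sum_congr rfl fun j _ => G.symm j i
      _ = 2 * G.cutSize A := by ring
  rw [Multigraph.linkCount]
  refine Eq.trans (congrArg (· / 2) ?_) (by omega : (2 * G.cutSize A) / 2 = G.cutSize A)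
  exact Eq.trans (Finset.sum_congr rfl fun u _ => Finset.sum_congr rfl fun v _ =>
    ite_congr' Iff.rfl) hsum

/-- A connected set crossing a cut contains an edge crossing the cut. -/
lemma exists_crossing_edge (G : Multigraph V) {e : Finset V} (hcon : G.ConnectedSet e)
    (A : Finset V) {u0 w0 : V} (hu0 : u0 ∈ e) (hu0A : u0 ∈ A) (hw0 : w0 ∈ e) (hw0A : w0 ∉ A) :
    ∃ u ∈ e, ∃ v ∈ e, 0 < G.m u v ∧ u ∈ A ∧ v ∉ A := by
  have hkey : ∀ (a c : (e : Set V)) (p : (G.toSimpleGraph.induce (e : Set V)).Walk a c),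
      (a : V) ∈ A → (c : V) ∉ A → ∃ u ∈ e, ∃ v ∈ e, 0 < G.m u v ∧ u ∈ A ∧ v ∉ A := by
    intro a c p
    induction p with
    | nil => intro h1 h2; exact absurd h1 h2
    | @cons a d c h q ih =>
      intro h1 h2
      by_cases hd : (d : V) ∈ A
      · exact ih hd h2
      · have hadj : G.toSimpleGraph.Adj (a : V) (d : V) := by
          simpa using h
        exact ⟨a, by simpa using a.2, d, by simpa using d.2, hadj, h1, hd⟩
  obtain ⟨p⟩ := hcon.preconnected ⟨u0, by simpa using hu0⟩ ⟨w0, by simpa using hw0⟩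
  exact hkey _ _ p hu0A hw0A

end Aux

section Aux2

open SimpleGraph Finset

open scoped Classical

variable {V : Type} [Fintype V] [DecidableEq V]

lemma hitting_le_nodeCount (G : Multigraph V) {N : Type} [Fintype N]
    (T : SimpleGraph N) (b : V → N) (hT : T.IsTree) (S : Finset (Finset V))
    (hS : G.IsScramble S) (n : N)
    (hsink : ∀ y, T.Adj n y → ∀ e ∈ S, (e ∩ side T b n y).Nonempty) :
    hittingNumber S ≤ G.nodeCount T b n := by
  set f : V → ℕ := fun v => ((Fintype.equivFin V) v : ℕ) with hf
  have hfinj : Function.Injective f := fun a c h => by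
    have := Fin.val_injective h
    exact (Fintype.equivFin V).injective this
  set cond : V → V → Prop := fun u v => b u ≠ n ∧ b v ≠ n ∧
    ∃ p : T.Walk (b u) (b v), p.IsPath ∧ n ∈ p.support with hcond
  have hcondsymm : ∀ u v, cond u v → cond v u := by
    rintro u v ⟨h1, h2, p, hp, hn⟩
    exact ⟨h2, h1, p.reverse, hp.reverse, by
      rw [SimpleGraph.Walk.support_reverse, List.mem_reverse]; exact hn⟩
  set Q : V → V → Prop := fun u v => cond u v ∧ 0 < G.m u v ∧ f u < f v with hQ
  set W' : Finset V := Finset.univ.filter (fun u => ∃ v, Q u v) with hW'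
  set W : Finset V := (Finset.univ.filter (fun v => b v = n)) ∪ W' with hW
  -- W is a hitting set
  have hhit : IsHittingSet S W := by
    intro e he
    by_cases hbn : ∃ v ∈ e, b v = n
    · obtain ⟨v, hv, hbv⟩ := hbn
      exact ⟨v, Finset.mem_inter.2 ⟨hv, Finset.mem_union.2
        (Or.inl (Finset.mem_filter.2 ⟨Finset.mem_univ _, hbv⟩))⟩⟩
    · push_neg at hbn
      have hcone := hS e he
      have hene : e.Nonempty := by
        have := hcone.nonempty
        obtain ⟨⟨u, hu⟩⟩ := this
        exact ⟨u, by simpa using hu⟩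
      obtain ⟨u0, hu0⟩ := hene
      have hbu0 : b u0 ≠ n := hbn u0 hu0
      -- find the neighbor y of n in direction of b u0
      obtain ⟨q0⟩ := hT.isConnected.preconnected n (b u0)
      obtain ⟨q, hq⟩ := q0.toPath
      have hqne : b u0 ≠ n := hbu0
      rcases hq3 : q with _ | ⟨hnyadj, q'⟩
      · exact absurd rfl hqne
      · rename_i y
        rw [hq3] at hq
        rw [SimpleGraph.Walk.cons_isPath_iff] at hq
        obtain ⟨hq', hnq'⟩ := hq
        -- u0 lies on the y-side of the link {n, y}
        have hu0side : u0 ∈ side T b y n := by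
          rw [mem_side_iff]
          have hq'del : (T.deleteEdges {s(y, n)}).Reachable y (b u0) := by
            refine ⟨q'.toDeleteEdges {s(y, n)} fun e' he' hmem => ?_⟩
            rw [Set.mem_singleton_iff] at hmem
            subst hmem
            exact hnq' (q'.snd_mem_support_of_mem_edges he')
          exact hq'del.symm
        -- some vertex of e lies on the n-side
        obtain ⟨w0, hw0⟩ := hsink y hnyadj e he
        rw [Finset.mem_inter] at hw0
        have hscompl := side_compl b hT hnyadj
        have hw0side : w0 ∉ side T b y n := by
          rw [hscompl, Finset.mem_compl]
          intro hc; exact hc hw0.2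
        -- crossing edge
        obtain ⟨u, hu, v, hv, hm, huA, hvA⟩ :=
          exists_crossing_edge G hcone (side T b y n) hu0 hu0side hw0.1 hw0side
        have hvsiden : v ∈ side T b n y := by
          have := hscompl ▸ hvA
          by_contra hc
          exact hvA (by rw [hscompl, Finset.mem_compl]; exact hc)
        -- every path from b u to b v passes through n
        have hcuv : cond u v := by
          refine ⟨hbn u hu, hbn v hv, ?_⟩
          obtain ⟨p0⟩ := hT.isConnected.preconnected (b u) (b v)
          obtain ⟨p, hp⟩ := p0.toPath
          refine ⟨p, hp, ?_⟩
          by_contra hns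
          have hpe : ∀ e' ∈ p.edges, e' ∉ ({s(n, y)} : Set (Sym2 N)) := by
            intro e' he' hmem
            rw [Set.mem_singleton_iff] at hmem
            subst hmem
            exact hns (p.fst_mem_support_of_mem_edges he')
          have hruv : (T.deleteEdges {s(n, y)}).Reachable (b u) (b v) :=
            ⟨p.toDeleteEdges {s(n, y)} hpe⟩
          have huy : (T.deleteEdges {s(n, y)}).Reachable (b u) y := by
            rw [deleteEdges_swap]
            exact mem_side_iff.1 huA
          have hvn : (T.deleteEdges {s(n, y)}).Reachable (b v) n :=
            mem_side_iff.1 hvsiden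
          exact not_reach_of_adj hT hnyadj ((hvn.symm.trans (hruv.symm.trans huy)).symm.symm.trans (Reachable.refl _)) |>.elim
        have huv : u ≠ v := by
          intro hc; rw [hc] at hm; rw [G.loopless] at hm; exact lt_irrefl 0 hm
        have hfuv : f u ≠ f v := fun hc => huv (hfinj hc)
        rcases lt_or_gt_of_ne hfuv with hlt | hgt
        · refine ⟨u, Finset.mem_inter.2 ⟨hu, Finset.mem_union.2 (Or.inr ?_)⟩⟩
          exact Finset.mem_filter.2 ⟨Finset.mem_univ _, ⟨v, hcuv, hm, hlt⟩⟩
        · refine ⟨v, Finset.mem_inter.2 ⟨hv, Finset.mem_union.2 (Or.inr ?_)⟩⟩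
          refine Finset.mem_filter.2 ⟨Finset.mem_univ _, ⟨u, hcondsymm u v hcuv, ?_, hgt⟩⟩
          rw [G.symm]; exact hm
  -- cardinality bound
  set s : ℕ := ∑ u : V, ∑ v : V, if Q u v then G.m u v else 0 with hs
  have hcardW' : W'.card ≤ s := by
    have h1 : W'.card = ∑ u ∈ W', 1 := (Finset.card_eq_sum_ones W')
    have h2 : ∀ u ∈ W', 1 ≤ ∑ v : V, if Q u v then G.m u v else 0 := by
      intro u hu
      rw [hW', Finset.mem_filter] at hu
      obtain ⟨v, hv⟩ := hu.2
      calc 1 ≤ (if Q u v then G.m u v else 0) := by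
            rw [if_pos hv]; exact hv.2.1
        _ ≤ ∑ v : V, if Q u v then G.m u v else 0 :=
            Finset.single_le_sum (f := fun w => if Q u w then G.m u w else 0)
              (fun _ _ => Nat.zero_le _) (Finset.mem_univ v)
    calc W'.card = ∑ u ∈ W', 1 := h1
      _ ≤ ∑ u ∈ W', ∑ v : V, if Q u v then G.m u v else 0 := Finset.sum_le_sum h2
      _ ≤ s := Finset.sum_le_sum_of_subset (Finset.subset_univ W')
  have hdouble : (∑ u : V, ∑ v : V, if cond u v then G.m u v else 0) = 2 * s := by
    have hstep : ∀ u v : V, (if cond u v then G.m u v else 0) =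
        (if Q u v then G.m u v else 0) + (if Q v u then G.m u v else 0) := by
      intro u v
      by_cases hm : 0 < G.m u v
      · by_cases hc : cond u v
        · have huv : u ≠ v := by
            intro h; rw [h] at hm; rw [G.loopless] at hm; exact lt_irrefl 0 hm
          have hfuv : f u ≠ f v := fun h => huv (hfinj h)
          rcases lt_or_gt_of_ne hfuv with hlt | hgt
          · rw [if_pos hc, if_pos ⟨hc, hm, hlt⟩, if_neg (fun h => absurd h.2.2 (not_lt.2 (le_of_lt hlt)))]
            omega
          · rw [if_pos hc, if_neg (fun h => absurd h.2.2 (not_lt.2 (le_of_lt hgt)))]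
            rw [if_pos ⟨hcondsymm u v hc, by rw [G.symm]; exact hm, hgt⟩]
            omega
        · rw [if_neg hc, if_neg (fun h => hc h.1), if_neg (fun h => hc (hcondsymm v u h.1))]
      · have hm0 : G.m u v = 0 := Nat.eq_zero_of_not_pos hm
        simp [hm0]
    have hswap : (∑ u : V, ∑ v : V, if Q v u then G.m u v else 0) = s := by
      rw [hs, Finset.sum_comm]
      refine Finset.sum_congr rfl fun v _ => Finset.sum_congr rfl fun u _ => ?_
      exact if_congr Iff.rfl (G.symm u v) rfl
    calc (∑ u : V, ∑ v : V, if cond u v then G.m u v else 0)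
        = (∑ u : V, ∑ v : V, ((if Q u v then G.m u v else 0) + (if Q v u then G.m u v else 0))) :=
          Finset.sum_congr rfl fun u _ => Finset.sum_congr rfl fun v _ => hstep u v
      _ = (∑ u : V, ∑ v : V, if Q u v then G.m u v else 0) +
          (∑ u : V, ∑ v : V, if Q v u then G.m u v else 0) := by
          simp only [Finset.sum_add_distrib]
      _ = s + s := by rw [hswap]
      _ = 2 * s := by ring
  have hnodecount : G.nodeCount T b n =
      (Finset.univ.filter fun v => b v = n).card + s := by
    rw [Multigraph.nodeCount]
    refine congrArg₂ (· + ·) rfl ?_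
    refine Eq.trans (congrArg (· / 2) ?_) (by omega : (2 * s) / 2 = s)
    exact Eq.trans (Finset.sum_congr rfl fun u _ => Finset.sum_congr rfl fun v _ =>
      ite_congr' (by rw [hcond])) hdouble
  have hcardW : W.card ≤ G.nodeCount T b n := by
    calc W.card ≤ (Finset.univ.filter fun v => b v = n).card + W'.card :=
          Finset.card_union_le _ _
      _ ≤ (Finset.univ.filter fun v => b v = n).card + s := by omega
      _ = G.nodeCount T b n := hnodecount.symm
  have : hittingNumber S ≤ W.card := Nat.sInf_le ⟨W, hhit, rfl⟩
  omega

end Aux2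

section Aux3

open SimpleGraph Finset

open scoped Classical

variable {V : Type} [Fintype V] [DecidableEq V]

lemma order_le_width (G : Multigraph V) (hG : G.Connected) {r : ℕ}
    (T : SimpleGraph (Fin r)) (b : V → Fin r) (hT : T.IsTree)
    (S : Finset (Finset V)) (hS : G.IsScramble S) :
    G.scrambleOrder S ≤ (G.decompositionWidth T b : ℕ∞) := by
  have hVne : Nonempty V := hG.nonempty
  have hNne : Nonempty (Fin r) := ⟨b (Classical.arbitrary V)⟩
  have hfin : ({k : ℕ | ∃ x y, T.Adj x y ∧ G.linkCount T b x y = k} ∪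
      {k : ℕ | ∃ n, G.nodeCount T b n = k}).Finite := by
    apply Set.Finite.union
    · apply Set.Finite.subset (Set.finite_range (fun p : Fin r × Fin r => G.linkCount T b p.1 p.2))
      rintro k ⟨x, y, _, rfl⟩; exact ⟨(x, y), rfl⟩
    · apply Set.Finite.subset (Set.finite_range (G.nodeCount T b))
      rintro k ⟨m, rfl⟩; exact ⟨m, rfl⟩
  have hbdd := hfin.bddAbove
  have hlink : ∀ x y, T.Adj x y → G.linkCount T b x y ≤ G.decompositionWidth T b :=
    fun x y h => le_csSup hbdd (Or.inl ⟨x, y, h, rfl⟩)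
  have hnode : ∀ m, G.nodeCount T b m ≤ G.decompositionWidth T b :=
    fun m => le_csSup hbdd (Or.inr ⟨m, rfl⟩)
  by_cases hall : ∀ x y, T.Adj x y →
      ((∀ e ∈ S, (e ∩ side T b y x).Nonempty) ∨ (∀ e ∈ S, (e ∩ side T b x y).Nonempty))
  · -- sink exists, use hitting number
    obtain ⟨m, hm⟩ := tree_sink_exists T hT
      (fun x y => ∀ e ∈ S, (e ∩ side T b y x).Nonempty) hall
    have hsink : ∀ y, T.Adj m y → ∀ e ∈ S, (e ∩ side T b m y).Nonempty := by
      intro y hy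
      exact hm y hy
    have h1 := hitting_le_nodeCount G T b hT S hS m hsink
    calc G.scrambleOrder S ≤ (hittingNumber S : ℕ∞) := min_le_left _ _
      _ ≤ ((G.nodeCount T b m : ℕ) : ℕ∞) := by exact_mod_cast Nat.cast_le.mpr h1
      _ ≤ (G.decompositionWidth T b : ℕ∞) := by exact_mod_cast Nat.cast_le.mpr (hnode m)
  · -- an egg-cut exists
    push_neg at hall
    obtain ⟨x, y, hxy, hne1, hne2⟩ := hall
    obtain ⟨e1, he1S, he1⟩ := hne1
    obtain ⟨e2, he2S, he2⟩ := hne2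
    have hscompl := side_compl b hT hxy
    have hsub : ∀ (e A : Finset V), e ∩ A = ∅ → e ⊆ Aᶜ := by
      intro e A hEA v hv
      rw [Finset.mem_compl]
      intro hc
      have : v ∈ e ∩ A := Finset.mem_inter.2 ⟨hv, hc⟩
      rw [hEA] at this
      exact absurd this (Finset.notMem_empty v)
    have he1sub : e1 ⊆ side T b x y := by
      have := hsub e1 (side T b y x) he1
      rwa [hscompl, compl_compl] at this
    have he2sub : e2 ⊆ (side T b x y)ᶜ := hsub e2 (side T b x y) he2
    have hecn : G.eggCutNumber S ≤ ((G.cutSize (side T b x y) : ℕ) : ℕ∞) :=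
      sInf_le ⟨side T b x y, ⟨e1, he1S, he1sub⟩, ⟨e2, he2S, he2sub⟩, rfl⟩
    have hlc := linkCount_eq_cutSize G T b hT hxy
    calc G.scrambleOrder S ≤ G.eggCutNumber S := min_le_right _ _
      _ ≤ ((G.cutSize (side T b x y) : ℕ) : ℕ∞) := hecn
      _ = ((G.linkCount T b x y : ℕ) : ℕ∞) := by rw [hlc]
      _ ≤ (G.decompositionWidth T b : ℕ∞) := Nat.cast_le.mpr (hlink x y hxy)

end Aux3

/-- For every finite connected loopless multigraph `G`, the scramble number of
`G` is at most the screewidth of `G`. -/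
theorem scrambleNumber_le_screewidth {V : Type} [Fintype V] [DecidableEq V]
    (G : Multigraph V) (hG : G.Connected) :
    G.scrambleNumber ≤ (G.screewidth : ℕ∞) := by
  classical
  have hVne : Nonempty V := hG.nonempty
  have htree1 : (⊥ : SimpleGraph (Fin 1)).IsTree := by
    constructor
    · refine SimpleGraph.Connected.mk ?_
      intro a b
      rw [Subsingleton.elim a b]
    · exact SimpleGraph.isAcyclic_bot
  have hne : {k : ℕ | ∃ (r : ℕ) (T : SimpleGraph (Fin r)) (b : V → Fin r),
      T.IsTree ∧ G.decompositionWidth T b = k}.Nonempty :=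
    ⟨G.decompositionWidth (⊥ : SimpleGraph (Fin 1)) (fun _ => 0),
      1, ⊥, fun _ => 0, htree1, rfl⟩
  have hmem : G.screewidth ∈ {k : ℕ | ∃ (r : ℕ) (T : SimpleGraph (Fin r)) (b : V → Fin r),
      T.IsTree ∧ G.decompositionWidth T b = k} := Nat.sInf_mem hne
  obtain ⟨r, T, b, hT, hw⟩ := hmem
  rw [Multigraph.scrambleNumber]
  apply sSup_le
  rintro k ⟨S, hS, rfl⟩
  rw [← hw]
  exact order_le_width G hG T b hT S hS
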